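/- Let V be a finite type and E a DAG on V. Let X = {X₁, …, X_k} (k ≥ 1, distinct), {Y}, and W be pairwise disjoint vertex sets with causal ordering W < {X₁} < ⋯ < {X_k} < {Y}. Suppose there exist W_k ∈ W and Z ⊆ W \ {W_k} such that (i) W_k and Y are d-connected given Z ∪ {X₁, …, X_{k-1}}, and (ii) W_k and Y are d-separated given Z ∪ {X₁, …, X_k}. Then Z ∪ {X₁, …, X_{k-1}} blocks every back-door path from X_k to Y. -/

import Mathlib

open scoped Classical

variable {V : Type*}

/-- `a` is an ancestor of `b` (every vertex is its own ancestor). -/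
def Anc (E : V → V → Prop) (a b : V) : Prop := Relation.ReflTransGen E a b

/-- A path in a directed graph `E` from `a` to `b`: a sequence of distinct vertices
`a = vtx 0, …, vtx len = b` (`len ≥ 1`) in which consecutive vertices are joined
by an edge of `E` in either direction. -/
structure GPath (E : V → V → Prop) (a b : V) where
  len : ℕ
  len_pos : 0 < len
  vtx : ℕ → V
  first : vtx 0 = a
  last : vtx len = b
  inj : ∀ i j, i ≤ len → j ≤ len → vtx i = vtx j → i = j
  adj : ∀ i, i < len → E (vtx i) (vtx (i + 1)) ∨ E (vtx (i + 1)) (vtx i)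

namespace GPath

variable {E : V → V → Prop} {a b : V}

/-- The interior vertex at position `i` is a collider on the path. -/
def IsColliderAt (p : GPath E a b) (i : ℕ) : Prop :=
  0 < i ∧ i < p.len ∧ E (p.vtx (i - 1)) (p.vtx i) ∧ E (p.vtx (i + 1)) (p.vtx i)

/-- A path is open given `S` if no non-collider on it lies in `S` and every collider
on it has a descendant in `S`. -/
def OpenGiven (p : GPath E a b) (S : Set V) : Prop :=
  (∀ i, 0 < i → i < p.len → ¬ p.IsColliderAt i → p.vtx i ∉ S) ∧
  (∀ i, p.IsColliderAt i → ∃ d ∈ S, Anc E (p.vtx i) d)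

/-- A back-door path: the first edge points into the first vertex. -/
def IsBackdoor (p : GPath E a b) : Prop := E (p.vtx 1) (p.vtx 0)

/-- A causal (directed) path. -/
def Causal (p : GPath E a b) : Prop := ∀ i, i < p.len → E (p.vtx i) (p.vtx (i + 1))

/-- A path is proper with respect to `X` if only its first vertex lies in `X`. -/
def ProperFrom (p : GPath E a b) (X : Set V) : Prop :=
  ∀ i, 0 < i → i ≤ p.len → p.vtx i ∉ X

/-- The vertex `w` lies on the path. -/
def MemV (p : GPath E a b) (w : V) : Prop := ∃ i ≤ p.len, p.vtx i = w

/-- The number of colliders on the path. -/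
noncomputable def numColliders (p : GPath E a b) : ℕ := Set.ncard {i | p.IsColliderAt i}

end GPath

/-- `A` and `B` are d-separated given `S`: every path from `A` to `B` is blocked given `S`. -/
def DSep (E : V → V → Prop) (A B S : Set V) : Prop :=
  ∀ a ∈ A, ∀ b ∈ B, ∀ p : GPath E a b, ¬ p.OpenGiven S

/-- `A` and `B` are d-connected given `S`: some path from `A` to `B` is open given `S`. -/
def DConn (E : V → V → Prop) (A B S : Set V) : Prop :=
  ∃ a ∈ A, ∃ b ∈ B, ∃ p : GPath E a b, p.OpenGiven S

/-- The set of descendants of a vertex set `S`. -/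
def descendants (E : V → V → Prop) (S : Set V) : Set V := {d | ∃ s ∈ S, Anc E s d}

/-- `S` blocks every back-door path from `x` to `y`. -/
def BlocksBackdoor (E : V → V → Prop) (x y : V) (S : Set V) : Prop :=
  ∀ p : GPath E x y, p.IsBackdoor → ¬ p.OpenGiven S

/-- The back-door criterion for `Z` relative to `(X, Y)`. -/
def BackdoorCriterion (E : V → V → Prop) (X Y Z : Set V) : Prop :=
  Z ∩ descendants E X = ∅ ∧
  ∀ x ∈ X, ∀ y ∈ Y, BlocksBackdoor E x y (Z ∪ (X \ {x}))

/-- The adjustment criterion for `Z` relative to `(X, Y)`: (a) `Z` contains no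
descendant of any `w ∉ X` lying on a proper causal path from `X` to `Y`, and
(b) `Z` blocks every proper non-causal path from `X` to `Y`. -/
def AdjustmentCriterion (E : V → V → Prop) (X Y Z : Set V) : Prop :=
  (∀ w, w ∉ X →
      (∃ x ∈ X, ∃ y ∈ Y, ∃ p : GPath E x y, p.ProperFrom X ∧ p.Causal ∧ p.MemV w) →
      ∀ z ∈ Z, ¬ Anc E w z) ∧
  (∀ x ∈ X, ∀ y ∈ Y, ∀ p : GPath E x y, p.ProperFrom X → ¬ p.Causal → ¬ p.OpenGiven Z)

section Aux

variable {E : V → V → Prop} {a x b : V}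

/-- Following a backward-pointing edge along a path, either we reach the start vertex
by a directed path, or we hit a collider that is a descendant. -/
lemma descend_back (p : GPath E a b) :
    ∀ j, j + 1 ≤ p.len → E (p.vtx (j + 1)) (p.vtx j) →
      Anc E (p.vtx (j + 1)) a ∨ ∃ c, p.IsColliderAt c ∧ Anc E (p.vtx (j + 1)) (p.vtx c) := by
  intro j
  induction j with
  | zero =>
    intro h1 hE
    refine Or.inl ?_
    have h := Relation.ReflTransGen.single hE
    rwa [p.first] at h
  | succ j ih =>
    intro h1 hE
    rcases p.adj j (by omega) with h | h
    · refine Or.inr ⟨j + 1, ⟨Nat.succ_pos _, by omega, ?_, hE⟩, Relation.ReflTransGen.single hE⟩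
      simpa using h
    · rcases ih (by omega) h with h' | ⟨c, hc, h'⟩
      · exact Or.inl (Relation.ReflTransGen.head hE h')
      · exact Or.inr ⟨c, hc, Relation.ReflTransGen.head hE h'⟩

lemma desc_or (p : GPath E a b) (S : Set V) (hopen : p.OpenGiven S)
    (j : ℕ) (h1 : j + 1 ≤ p.len) (hE : E (p.vtx (j + 1)) (p.vtx j)) :
    Anc E (p.vtx (j + 1)) a ∨ ∃ d ∈ S, Anc E (p.vtx (j + 1)) d := by
  rcases descend_back p j h1 hE with h | ⟨c, hc, hanc⟩
  · exact Or.inl h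
  · obtain ⟨d, hd, hanc'⟩ := hopen.2 c hc
    exact Or.inr ⟨d, hd, hanc.trans hanc'⟩

/-- The vertex function of a spliced path. -/
def spliceVtx (qv pv : ℕ → V) (t₀ s₀ : ℕ) : ℕ → V :=
  fun j => if j ≤ t₀ then qv j else pv (s₀ + (j - t₀))

/-- Splicing a prefix of `q` (up to `t₀`) with a suffix of `p` (from `s₀`), where the
junction vertices agree and no earlier vertex of `q` lies on `p`. -/
def splice (q : GPath E a b) (p : GPath E x b)
    (t₀ s₀ : ℕ) (ht : t₀ ≤ q.len) (hs : s₀ < p.len)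
    (hqp : p.vtx s₀ = q.vtx t₀)
    (hmin : ∀ t < t₀, ∀ s ≤ p.len, p.vtx s ≠ q.vtx t) : GPath E a b where
  len := t₀ + (p.len - s₀)
  len_pos := by omega
  vtx := spliceVtx q.vtx p.vtx t₀ s₀
  first := by
    simp only [spliceVtx, if_pos (Nat.zero_le _), q.first]
  last := by
    simp only [spliceVtx]
    rw [if_neg (by omega), show s₀ + (t₀ + (p.len - s₀) - t₀) = p.len from by omega, p.last]
  inj := by
    intro j1 j2 h1 h2 heq
    simp only [spliceVtx] at heq
    by_cases c1 : j1 ≤ t₀ <;> by_cases c2 : j2 ≤ t₀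
    · rw [if_pos c1, if_pos c2] at heq
      exact q.inj _ _ (by omega) (by omega) heq
    · rw [if_pos c1, if_neg c2] at heq
      rcases Nat.lt_or_ge j1 t₀ with h | h
      · exact absurd heq.symm (hmin j1 h _ (by omega))
      · have hj1 : j1 = t₀ := by omega
        rw [hj1, ← hqp] at heq
        have := p.inj _ _ (by omega) (by omega) heq
        omega
    · rw [if_neg c1, if_pos c2] at heq
      rcases Nat.lt_or_ge j2 t₀ with h | h
      · exact absurd heq (hmin j2 h _ (by omega))
      · have hj2 : j2 = t₀ := by omega
        rw [hj2, ← hqp] at heq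
        have := p.inj _ _ (by omega) (by omega) heq.symm
        omega
    · rw [if_neg c1, if_neg c2] at heq
      have := p.inj _ _ (by omega) (by omega) heq
      omega
  adj := by
    intro j hj
    simp only [spliceVtx]
    by_cases c1 : j + 1 ≤ t₀
    · rw [if_pos (by omega), if_pos c1]
      exact q.adj j (by omega)
    · by_cases c2 : j ≤ t₀
      · have hj0 : j = t₀ := by omega
        rw [if_pos c2, if_neg c1, hj0, ← hqp,
          show s₀ + (t₀ + 1 - t₀) = s₀ + 1 from by omega]
        exact p.adj s₀ hs
      · rw [if_neg c1, if_neg c2,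
          show s₀ + (j + 1 - t₀) = s₀ + (j - t₀) + 1 from by omega]
        exact p.adj _ (by omega)

lemma splice_len (q : GPath E a b) (p : GPath E x b)
    (t₀ s₀ : ℕ) (ht : t₀ ≤ q.len) (hs : s₀ < p.len)
    (hqp : p.vtx s₀ = q.vtx t₀)
    (hmin : ∀ t < t₀, ∀ s ≤ p.len, p.vtx s ≠ q.vtx t) :
    (splice q p t₀ s₀ ht hs hqp hmin).len = t₀ + (p.len - s₀) := rfl

lemma splice_vtx_low (q : GPath E a b) (p : GPath E x b)
    (t₀ s₀ : ℕ) (ht : t₀ ≤ q.len) (hs : s₀ < p.len)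
    (hqp : p.vtx s₀ = q.vtx t₀)
    (hmin : ∀ t < t₀, ∀ s ≤ p.len, p.vtx s ≠ q.vtx t)
    (j : ℕ) (hj : j ≤ t₀) :
    (splice q p t₀ s₀ ht hs hqp hmin).vtx j = q.vtx j := by
  show spliceVtx _ _ _ _ j = _
  simp only [spliceVtx]
  rw [if_pos hj]

lemma splice_vtx_high (q : GPath E a b) (p : GPath E x b)
    (t₀ s₀ : ℕ) (ht : t₀ ≤ q.len) (hs : s₀ < p.len)
    (hqp : p.vtx s₀ = q.vtx t₀)
    (hmin : ∀ t < t₀, ∀ s ≤ p.len, p.vtx s ≠ q.vtx t)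
    (j : ℕ) (hj : t₀ ≤ j) :
    (splice q p t₀ s₀ ht hs hqp hmin).vtx j = p.vtx (s₀ + (j - t₀)) := by
  show spliceVtx _ _ _ _ j = _
  simp only [spliceVtx]
  rcases Nat.lt_or_ge t₀ j with h | h
  · rw [if_neg (by omega)]
  · have hj' : j = t₀ := by omega
    rw [if_pos (by omega), hj', ← hqp,
      show s₀ + (t₀ - t₀) = s₀ from by omega]

end Aux

/-- **R1 Build, base case (graphical version).** If `W_k ∈ W` and `Z ⊆ W \ {W_k}`
with `W_k` and `Y` d-connected given `Z ∪ {X 0, …, X (k-1)}` and d-separated given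
`Z ∪ {X 0, …, X k}`, then `Z ∪ {X 0, …, X (k-1)}` blocks every back-door path from
`X k` to `Y`. -/
theorem stmt_6 [Fintype V] (E : V → V → Prop)
    (hdag : Irreflexive (Relation.TransGen E))
    (k : ℕ) (X : Fin (k + 1) → V) (hXinj : Function.Injective X)
    (Y : V) (W : Set V)
    (hXY : ∀ i, X i ≠ Y) (hXW : ∀ i, X i ∉ W) (hYW : Y ∉ W)
    (hordWX : ∀ i, ∀ w ∈ W, ¬ Anc E (X i) w)
    (hordWY : ∀ w ∈ W, ¬ Anc E Y w)
    (hordXX : ∀ i j : Fin (k + 1), i < j → ¬ Anc E (X j) (X i))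
    (hordXY : ∀ i, ¬ Anc E Y (X i))
    (Wk : V) (hWk : Wk ∈ W)
    (Z : Set V) (hZ : Z ⊆ W \ {Wk})
    (hconn : ∃ p : GPath E Wk Y,
      p.OpenGiven (Z ∪ X '' {j : Fin (k + 1) | j < Fin.last k}))
    (hsep : ∀ p : GPath E Wk Y, ¬ p.OpenGiven (Z ∪ Set.range X)) :
    BlocksBackdoor E (X (Fin.last k)) Y
      (Z ∪ X '' {j : Fin (k + 1) | j < Fin.last k}) := by
  classical
  intro p hbd hpopen
  obtain ⟨q, hqopen⟩ := hconn
  set S : Set V := Z ∪ X '' {j : Fin (k + 1) | j < Fin.last k} with hSdef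
  set T : Set V := Z ∪ Set.range X with hTdef
  have hST : S ⊆ T := by
    rintro v (hv | ⟨j, _, rfl⟩)
    · exact Or.inl hv
    · exact Or.inr ⟨j, rfl⟩
  have hnotT : ∀ v, v ∉ S → v ≠ X (Fin.last k) → v ∉ T := by
    rintro v hvS hvX (hv | ⟨j, rfl⟩)
    · exact hvS (Or.inl hv)
    · by_cases hj : j = Fin.last k
      · exact hvX (by rw [hj])
      · refine hvS (Or.inr ⟨j, ?_, rfl⟩)
        simpa [Fin.lt_def, Fin.val_last] using Fin.val_lt_last hj
  -- Since q is open given S but blocked given T = S ∪ {X (last k)},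
  -- there is an interior non-collider of q lying in T.
  have hexi : ∃ i, 0 < i ∧ i < q.len ∧ ¬ q.IsColliderAt i ∧ q.vtx i ∈ T := by
    by_contra hcon
    push_neg at hcon
    exact hsep q ⟨hcon, fun i hc =>
      (hqopen.2 i hc).imp fun d hd => ⟨hST hd.1, hd.2⟩⟩
  obtain ⟨i, hi0, hilen, hinc, hiT⟩ := hexi
  have hiS : q.vtx i ∉ S := hqopen.1 i hi0 hilen hinc
  have hXk : q.vtx i = X (Fin.last k) := by
    rcases hiT with h | ⟨j, hj⟩
    · exact absurd (Or.inl h) hiS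
    · by_cases hjl : j = Fin.last k
      · rw [← hj, hjl]
      · refine absurd (Or.inr ⟨j, ?_, hj⟩) hiS
        simpa [Fin.lt_def, Fin.val_last] using Fin.val_lt_last hjl
  have hXk_no_desc : ∀ d ∈ S, ¬ Anc E (X (Fin.last k)) d := by
    rintro d (hd | ⟨j, hj, rfl⟩) h
    · exact hordWX (Fin.last k) d (hZ hd).1 h
    · exact hordXX j (Fin.last k) hj h
  -- The edge of q on the W-side of X (last k) points into X (last k).
  have hedge : E (q.vtx (i - 1)) (q.vtx i) := by
    have hadj := q.adj (i - 1) (by omega)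
    rw [show i - 1 + 1 = i from by omega] at hadj
    rcases hadj with h | h
    · exact h
    · exfalso
      have h' : E (q.vtx (i - 1 + 1)) (q.vtx (i - 1)) := by
        rw [show i - 1 + 1 = i from by omega]; exact h
      rcases desc_or q S hqopen (i - 1) (by omega) h' with hanc | ⟨d, hd, hanc⟩
      · rw [show i - 1 + 1 = i from by omega, hXk] at hanc
        exact hordWX (Fin.last k) Wk hWk hanc
      · rw [show i - 1 + 1 = i from by omega, hXk] at hanc
        exact hXk_no_desc d hd hanc
  -- Find the first vertex of q (up to i) lying on p.
  have hexmin : ∃ t, t ≤ i ∧ ∃ s, s ≤ p.len ∧ p.vtx s = q.vtx t :=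
    ⟨i, le_rfl, 0, Nat.zero_le _, by rw [p.first, hXk]⟩
  obtain ⟨t₀, ⟨ht₀i, s₀, hs₀len, hs₀⟩, htminP⟩ :
      ∃ t, (t ≤ i ∧ ∃ s, s ≤ p.len ∧ p.vtx s = q.vtx t) ∧
        ∀ t' < t, ¬ (t' ≤ i ∧ ∃ s, s ≤ p.len ∧ p.vtx s = q.vtx t') :=
    ⟨Nat.find hexmin, Nat.find_spec hexmin, fun t' ht' => Nat.find_min hexmin ht'⟩
  have htmin : ∀ t < t₀, ∀ s ≤ p.len, p.vtx s ≠ q.vtx t := by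
    intro t ht s hs hst
    exact htminP t ht ⟨by omega, s, hs, hst⟩
  have hs₀lt : s₀ < p.len := by
    rcases eq_or_lt_of_le hs₀len with h | h
    · exfalso
      have hY : q.vtx t₀ = q.vtx q.len := by rw [← hs₀, h, p.last, q.last]
      have := q.inj t₀ q.len (by omega) le_rfl hY
      omega
    · exact h
  have ht₀q : t₀ ≤ q.len := by omega
  set r : GPath E Wk Y := splice q p t₀ s₀ ht₀q hs₀lt hs₀ htmin with hrdef
  have hrlen : r.len = t₀ + (p.len - s₀) := rfl
  have hrlow : ∀ j, j ≤ t₀ → r.vtx j = q.vtx j := fun j hj =>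
    splice_vtx_low q p t₀ s₀ ht₀q hs₀lt hs₀ htmin j hj
  have hrhigh : ∀ j, t₀ ≤ j → r.vtx j = p.vtx (s₀ + (j - t₀)) := fun j hj =>
    splice_vtx_high q p t₀ s₀ ht₀q hs₀lt hs₀ htmin j hj
  refine hsep r ⟨?_, ?_⟩
  · -- non-colliders of r are not in T
    intro j hj0 hjlen hnc
    rw [hrlen] at hjlen
    rcases Nat.lt_trichotomy j t₀ with hlt | heq | hgt
    · rw [hrlow j (by omega)]
      have hqnc : ¬ q.IsColliderAt j := by
        rintro ⟨_, _, e1, e2⟩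
        refine hnc ⟨hj0, by rw [hrlen]; omega, ?_, ?_⟩
        · rw [hrlow (j - 1) (by omega), hrlow j (by omega)]; exact e1
        · rw [hrlow (j + 1) (by omega), hrlow j (by omega)]; exact e2
      have hjS : q.vtx j ∉ S := hqopen.1 j hj0 (by omega) hqnc
      refine hnotT _ hjS ?_
      intro hEq
      have : j = i := q.inj j i (by omega) (by omega) (by rw [hEq, hXk])
      omega
    · subst heq
      rw [hrlow j le_rfl]
      by_cases e1 : E (q.vtx (j - 1)) (q.vtx j)
      · -- then the p-side edge must point out of the junction
        have e2 : ¬ E (p.vtx (s₀ + 1)) (q.vtx j) := by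
          intro e2
          refine hnc ⟨hj0, by rw [hrlen]; omega, ?_, ?_⟩
          · rw [hrlow (j - 1) (by omega), hrlow j le_rfl]; exact e1
          · rw [hrhigh (j + 1) (by omega), hrlow j le_rfl,
              show s₀ + (j + 1 - j) = s₀ + 1 from by omega]
            exact e2
        have hs₀pos : 0 < s₀ := by
          rcases Nat.eq_zero_or_pos s₀ with h0 | h0
          · exfalso
            apply e2
            rw [← hs₀, h0]
            exact hbd
          · exact h0
        have hpnc : ¬ p.IsColliderAt s₀ := by
          rintro ⟨_, _, _, ecol⟩
          exact e2 (by rw [← hs₀]; exact ecol)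
        have hps : p.vtx s₀ ∉ S := hpopen.1 s₀ hs₀pos hs₀lt hpnc
        rw [← hs₀]
        refine hnotT _ hps ?_
        intro hE2
        have : s₀ = 0 := p.inj s₀ 0 (by omega) (by omega) (by rw [hE2, p.first])
        omega
      · have hqnc : ¬ q.IsColliderAt j := by
          rintro ⟨_, _, ec, _⟩; exact e1 ec
        have hjS : q.vtx j ∉ S := hqopen.1 j hj0 (by omega) hqnc
        refine hnotT _ hjS ?_
        intro hE
        have hti : j = i := q.inj j i (by omega) (by omega) (by rw [hE, hXk])
        exact e1 (by rw [hti]; exact hedge)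
    · have hs' : s₀ + (j - t₀) < p.len := by omega
      rw [hrhigh j (by omega)]
      have hpnc : ¬ p.IsColliderAt (s₀ + (j - t₀)) := by
        rintro ⟨_, _, e1, e2⟩
        refine hnc ⟨hj0, by rw [hrlen]; omega, ?_, ?_⟩
        · rw [hrhigh (j - 1) (by omega), hrhigh j (by omega),
            show s₀ + (j - 1 - t₀) = s₀ + (j - t₀) - 1 from by omega]
          exact e1
        · rw [hrhigh (j + 1) (by omega), hrhigh j (by omega),
            show s₀ + (j + 1 - t₀) = s₀ + (j - t₀) + 1 from by omega]
          exact e2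
      have hjS : p.vtx (s₀ + (j - t₀)) ∉ S := hpopen.1 _ (by omega) hs' hpnc
      refine hnotT _ hjS ?_
      intro hE
      have : s₀ + (j - t₀) = 0 := p.inj _ 0 (by omega) (by omega) (by rw [hE, p.first])
      omega
  · -- colliders of r have a descendant in T
    rintro j ⟨hj0, hjlen, e1, e2⟩
    rw [hrlen] at hjlen
    rcases Nat.lt_trichotomy j t₀ with hlt | heq | hgt
    · have hqc : q.IsColliderAt j := by
        refine ⟨hj0, by omega, ?_, ?_⟩
        · rw [← hrlow (j - 1) (by omega), ← hrlow j (by omega)]; exact e1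
        · rw [← hrlow (j + 1) (by omega), ← hrlow j (by omega)]; exact e2
      obtain ⟨d, hd, hanc⟩ := hqopen.2 j hqc
      exact ⟨d, hST hd, by rw [hrlow j (by omega)]; exact hanc⟩
    · subst heq
      rcases Nat.eq_zero_or_pos s₀ with h0 | h0
      · refine ⟨X (Fin.last k), Or.inr ⟨Fin.last k, rfl⟩, ?_⟩
        rw [hrlow j le_rfl, ← hs₀, h0, p.first]
        exact Relation.ReflTransGen.refl
      · have hadj := p.adj (s₀ - 1) (by omega)
        rw [show s₀ - 1 + 1 = s₀ from by omega] at hadj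
        rcases hadj with h | h
        · have h3 : r.vtx (j + 1) = p.vtx (s₀ + 1) := by
            rw [hrhigh (j + 1) (by omega)]; congr 1; omega
          have h2 : r.vtx j = p.vtx s₀ := by rw [hrlow j le_rfl, ← hs₀]
          have hpc : p.IsColliderAt s₀ := by
            refine ⟨h0, hs₀lt, h, ?_⟩
            rw [← h3, ← h2]; exact e2
          obtain ⟨d, hd, hanc⟩ := hpopen.2 s₀ hpc
          exact ⟨d, hST hd, by rw [hrlow j le_rfl, ← hs₀]; exact hanc⟩
        · have h' : E (p.vtx (s₀ - 1 + 1)) (p.vtx (s₀ - 1)) := by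
            rw [show s₀ - 1 + 1 = s₀ from by omega]; exact h
          rcases desc_or p S hpopen (s₀ - 1) (by omega) h' with hanc | ⟨d, hd, hanc⟩
          · rw [show s₀ - 1 + 1 = s₀ from by omega] at hanc
            exact ⟨X (Fin.last k), Or.inr ⟨Fin.last k, rfl⟩,
              by rw [hrlow j le_rfl, ← hs₀]; exact hanc⟩
          · rw [show s₀ - 1 + 1 = s₀ from by omega] at hanc
            exact ⟨d, hST hd, by rw [hrlow j le_rfl, ← hs₀]; exact hanc⟩
    · have hs' : s₀ + (j - t₀) < p.len := by omega
      have hpc : p.IsColliderAt (s₀ + (j - t₀)) := by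
        refine ⟨by omega, hs', ?_, ?_⟩
        · rw [show s₀ + (j - t₀) - 1 = s₀ + (j - 1 - t₀) from by omega,
            ← hrhigh (j - 1) (by omega), ← hrhigh j (by omega)]
          exact e1
        · rw [show s₀ + (j - t₀) + 1 = s₀ + (j + 1 - t₀) from by omega,
            ← hrhigh (j + 1) (by omega), ← hrhigh j (by omega)]
          exact e2
      obtain ⟨d, hd, hanc⟩ := hpopen.2 _ hpc
      exact ⟨d, hST hd, by rw [hrhigh j (by omega)]; exact hanc⟩
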